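/- Let K ⊆ ℝ^n be an empty lattice simplex, with n ≥ 2. Then for every lattice point x ∈ nK, there exists a lattice point z ∈ K ∩ ℤ^n such that x − z ∈ (n−1)K. Equivalently, nK ∩ ℤ^n = ((n−1)K ∩ ℤ^n) + (K ∩ ℤ^n) as a Minkowski sum. -/

import Mathlib

open Pointwise

/-- The set of lattice points (points with integer coordinates) of `ℝ^n`. -/
def latticePoints (n : ℕ) : Set (Fin n → ℝ) := {x | ∀ i, ∃ z : ℤ, x i = (z : ℝ)}

private lemma latticePoints_add {n : ℕ} {x y : Fin n → ℝ} (hx : x ∈ latticePoints n)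
    (hy : y ∈ latticePoints n) : x + y ∈ latticePoints n := by
  intro i
  obtain ⟨a, ha⟩ := hx i
  obtain ⟨b, hb⟩ := hy i
  exact ⟨a + b, by simp [ha, hb]⟩

private lemma latticePoints_sub {n : ℕ} {x y : Fin n → ℝ} (hx : x ∈ latticePoints n)
    (hy : y ∈ latticePoints n) : x - y ∈ latticePoints n := by
  intro i
  obtain ⟨a, ha⟩ := hx i
  obtain ⟨b, hb⟩ := hy i
  exact ⟨a - b, by simp [ha, hb]⟩

private lemma latticePoints_sum {n : ℕ} (t : Finset (Fin n → ℝ))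
    (h : ∀ v ∈ t, v ∈ latticePoints n) : (∑ v ∈ t, v) ∈ latticePoints n := by
  classical
  refine Finset.sum_induction _ (· ∈ latticePoints n) (fun a b ha hb => latticePoints_add ha hb)
    (fun i => ⟨0, by simp⟩) h

/-- Let `K ⊆ ℝ^n` be an empty lattice simplex (the convex hull of a finite affinely
independent set of lattice points, containing no lattice points other than its extreme
points), with `n ≥ 2`.  Then `nK ∩ ℤ^n = ((n-1)K ∩ ℤ^n) + (K ∩ ℤ^n)` (Minkowski sum),
i.e. every lattice point `x ∈ nK` is of the form `z + w` with `z ∈ (n-1)K` a lattice point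
and `w ∈ K ∩ ℤ^n`. -/
theorem empty_simplex_decomposition (n : ℕ) (hn : 2 ≤ n)
    (S : Set (Fin n → ℝ)) (hSfin : S.Finite) (hSL : S ⊆ latticePoints n)
    (hind : AffineIndependent ℝ ((↑) : S → (Fin n → ℝ)))
    (K : Set (Fin n → ℝ)) (hK : K = convexHull ℝ S)
    (hempty : K ∩ latticePoints n = K.extremePoints ℝ) :
    ((n : ℝ) • K) ∩ latticePoints n =
      ((((n - 1 : ℕ)) : ℝ) • K) ∩ latticePoints n + (K ∩ latticePoints n) := by
  classical
  have hn1 : (1 : ℕ) ≤ n := le_trans (by norm_num) hn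
  have hcast : (((n - 1 : ℕ)) : ℝ) = (n : ℝ) - 1 := by
    rw [Nat.cast_sub hn1, Nat.cast_one]
  have hnpos : (0 : ℝ) < n := by positivity
  have hn1pos : (0 : ℝ) < (n : ℝ) - 1 := by
    have : (2 : ℝ) ≤ n := by exact_mod_cast hn
    linarith
  have hKconv : Convex ℝ K := hK ▸ convex_convexHull ℝ S
  set t : Finset (Fin n → ℝ) := hSfin.toFinset with htdef
  have htS : (t : Set (Fin n → ℝ)) = S := hSfin.coe_toFinset
  have hKt : K = convexHull ℝ (t : Set (Fin n → ℝ)) := by rw [htS, hK]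
  apply Set.Subset.antisymm
  · -- hard direction
    rintro x ⟨hxK, hxL⟩
    obtain ⟨y, hyK, hyx⟩ := Set.mem_smul_set.mp hxK
    rw [hKt, Finset.mem_convexHull'] at hyK
    obtain ⟨w, hw0, hw1, hwy⟩ := hyK
    set μ : (Fin n → ℝ) → ℝ := fun v => (n : ℝ) * w v with hμdef
    have hμ0 : ∀ v ∈ t, 0 ≤ μ v := fun v hv => by
      have := hw0 v hv; positivity
    have hμsum : ∑ v ∈ t, μ v = n := by
      rw [hμdef, ← Finset.mul_sum, hw1, mul_one]
    have hμx : ∑ v ∈ t, μ v • v = x := by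
      rw [← hyx, ← hwy, Finset.smul_sum]
      refine Finset.sum_congr rfl fun v hv => ?_
      rw [smul_smul]
    by_cases hcase : ∃ v ∈ t, 1 ≤ μ v
    · obtain ⟨v, hvt, hv1⟩ := hcase
      have hvS : v ∈ S := htS ▸ hvt
      have hvK : v ∈ K := hK ▸ subset_convexHull ℝ S hvS
      have hvL : v ∈ latticePoints n := hSL hvS
      refine Set.mem_add.mpr ⟨x - v, ⟨?_, latticePoints_sub hxL hvL⟩,
        v, ⟨hvK, hvL⟩, by abel⟩
      -- x - v ∈ (n-1) • K
      rw [hcast]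
      refine Set.mem_smul_set.mpr ⟨((n : ℝ) - 1)⁻¹ • (x - v), ?_, ?_⟩
      · rw [hKt, Finset.mem_convexHull']
        refine ⟨fun u => (μ u - if u = v then 1 else 0) / ((n : ℝ) - 1), ?_, ?_, ?_⟩
        · intro u hu
          by_cases h : u = v
          · subst h
            simp only [if_pos rfl]
            have : (0:ℝ) ≤ μ u - 1 := by linarith
            positivity
          · simp only [if_neg h, sub_zero]
            have := hμ0 u hu
            positivity
        · rw [← Finset.sum_div, Finset.sum_sub_distrib, hμsum,
            Finset.sum_ite_eq' t v (fun _ => (1:ℝ)), if_pos hvt]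
          field_simp
        · have : ∀ u ∈ t, ((μ u - if u = v then 1 else 0) / ((n : ℝ) - 1)) • u
              = ((n : ℝ) - 1)⁻¹ • ((μ u • u) - (if u = v then u else 0)) := by
            intro u hu
            by_cases h : u = v
            · subst h
              simp [div_eq_inv_mul, sub_smul, mul_smul, smul_sub]
            · simp [h, div_eq_inv_mul, mul_smul]
          rw [Finset.sum_congr rfl this, ← Finset.smul_sum, Finset.sum_sub_distrib, hμx,
            Finset.sum_ite_eq' t v (fun u => u), if_pos hvt]
      · rw [smul_smul, mul_inv_cancel₀ (ne_of_gt hn1pos), one_smul]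
    · -- all μ v < 1 : contradiction with emptiness
      exfalso
      push_neg at hcase
      have htne : t.Nonempty := by
        rcases Finset.eq_empty_or_nonempty t with h | h
        · rw [h, Finset.sum_empty] at hw1; norm_num at hw1
        · exact h
      -- card bound
      haveI : Fintype S := hSfin.fintype
      have hcard_le : t.card ≤ n + 1 := by
        have h1 : Fintype.card S ≤
            Module.finrank ℝ (vectorSpan ℝ (Set.range ((↑) : S → (Fin n → ℝ)))) + 1 :=
          hind.card_le_finrank_succ
        have h2 : Module.finrank ℝ (vectorSpan ℝ (Set.range ((↑) : S → (Fin n → ℝ))))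
            ≤ Module.finrank ℝ (Fin n → ℝ) := Submodule.finrank_le _
        have h3 : Module.finrank ℝ (Fin n → ℝ) = n := Module.finrank_fin_fun ℝ
        have h4 : t.card = Fintype.card S := by
          rw [htdef, Set.Finite.card_toFinset]
        omega
      have hcard_gt : (n : ℝ) < t.card := by
        calc (n : ℝ) = ∑ v ∈ t, μ v := hμsum.symm
          _ < ∑ v ∈ t, (1 : ℝ) := Finset.sum_lt_sum_of_nonempty htne hcase
          _ = t.card := by simp
      have hcard : t.card = n + 1 := by
        have : n < t.card := by exact_mod_cast hcard_gt
        omega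
      -- each μ v > 0
      have hμpos : ∀ v ∈ t, 0 < μ v := by
        intro v hv
        have herase : (t.erase v).card = n := by
          rw [Finset.card_erase_of_mem hv, hcard]
          omega
        have herane : (t.erase v).Nonempty := by
          rw [← Finset.card_pos, herase]; omega
        have hlt : ∑ u ∈ t.erase v, μ u < n := by
          calc ∑ u ∈ t.erase v, μ u < ∑ u ∈ t.erase v, (1 : ℝ) :=
                Finset.sum_lt_sum_of_nonempty herane
                  (fun u hu => hcase u (Finset.mem_of_mem_erase hu))
            _ = n := by rw [Finset.sum_const, herase]; simp
        have := Finset.sum_erase_add t μ hv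
        rw [hμsum] at this
        linarith
      -- the lattice point y' = Σ v - x
      set y' : Fin n → ℝ := (∑ v ∈ t, v) - x with hy'def
      have hy'L : y' ∈ latticePoints n :=
        latticePoints_sub (latticePoints_sum t (fun v hv => hSL (htS ▸ hv))) hxL
      have hy'sum : y' = ∑ v ∈ t, (1 - μ v) • v := by
        rw [hy'def, ← hμx, ← Finset.sum_sub_distrib]
        refine Finset.sum_congr rfl fun v hv => ?_
        rw [sub_smul, one_smul]
      have hwsum : ∑ v ∈ t, (1 - μ v) = 1 := by
        rw [Finset.sum_sub_distrib, hμsum, Finset.sum_const, hcard]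
        rw [nsmul_eq_mul, mul_one]
        push_cast
        ring
      have hy'K : y' ∈ K := by
        rw [hKt, Finset.mem_convexHull']
        exact ⟨fun v => 1 - μ v, fun v hv => sub_nonneg.mpr (hcase v hv).le,
          hwsum, hy'sum.symm⟩
      have hy'ext : y' ∈ K.extremePoints ℝ := by
        rw [← hempty]; exact ⟨hy'K, hy'L⟩
      rw [mem_extremePoints] at hy'ext
      -- every vertex equals y'
      have hall : ∀ e ∈ t, e = y' := by
        intro e het
        have heμlt := hcase e het
        have heμpos := hμpos e het
        set c : ℝ := 1 - μ e with hcdef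
        have hc0 : 0 < c := by simp [hcdef]; linarith
        have hc1 : c < 1 := by simp [hcdef]; linarith
        set q : Fin n → ℝ := ∑ u ∈ t.erase e, (1 - μ u) • u with hqdef
        have hy'q : y' = c • e + q := by
          rw [hy'sum, hqdef, ← Finset.sum_erase_add t _ het, add_comm]
        set p : Fin n → ℝ := (μ e)⁻¹ • q with hpdef
        have hqsum : ∑ u ∈ t.erase e, (1 - μ u) = μ e := by
          have := Finset.sum_erase_add t (fun v => 1 - μ v) het
          rw [hwsum] at this
          linarith
        have hpK : p ∈ K := by
          rw [hKt, Finset.mem_convexHull']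
          refine ⟨fun u => (if u = e then 0 else (1 - μ u)) / μ e, ?_, ?_, ?_⟩
          · intro u hu
            by_cases h : u = e
            · simp [h, le_of_lt heμpos]
            · simp only [if_neg h]
              have := hcase u hu
              have : (0:ℝ) ≤ 1 - μ u := by linarith
              positivity
          · rw [← Finset.sum_div]
            rw [← Finset.sum_erase_add t _ het, if_pos rfl, add_zero]
            rw [Finset.sum_congr rfl (fun u hu =>
              if_neg (Finset.ne_of_mem_erase hu) : ∀ u ∈ t.erase e, _ = (1 - μ u)), hqsum]
            field_simp
          · have hterm : ∀ u ∈ t, ((if u = e then 0 else (1 - μ u)) / μ e) • u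
                = (μ e)⁻¹ • (if u = e then 0 else (1 - μ u) • u) := by
              intro u hu
              by_cases h : u = e
              · simp [h]
              · simp [h, div_eq_inv_mul, mul_smul]
            rw [Finset.sum_congr rfl hterm, ← Finset.smul_sum, hpdef, hqdef]
            congr 1
            rw [← Finset.sum_erase_add t _ het, if_pos rfl, add_zero]
            exact Finset.sum_congr rfl fun u hu => if_neg (Finset.ne_of_mem_erase hu)
        have heK : e ∈ K := hK ▸ subset_convexHull ℝ S (htS ▸ het)
        have hseg : y' ∈ openSegment ℝ e p := by
          refine ⟨c, 1 - c, hc0, by linarith, by ring, ?_⟩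
          rw [hy'q, hpdef, smul_smul]
          have : 1 - c = μ e := by rw [hcdef]; ring
          rw [this, mul_inv_cancel₀ (ne_of_gt heμpos), one_smul]
        exact (hy'ext.2 e heK p hpK hseg).1
      obtain ⟨a, hat, b, hbt, hab⟩ := Finset.one_lt_card.mp (by omega : 1 < t.card)
      exact hab ((hall a hat).trans (hall b hbt).symm)
  · -- easy direction
    rintro x hx
    obtain ⟨z, ⟨hzK, hzL⟩, v, ⟨hvK, hvL⟩, rfl⟩ := Set.mem_add.mp hx
    rw [hcast] at hzK
    obtain ⟨a, haK, haz⟩ := Set.mem_smul_set.mp hzK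
    refine ⟨?_, latticePoints_add hzL hvL⟩
    refine Set.mem_smul_set.mpr ⟨(((n : ℝ) - 1) / n) • a + ((1 : ℝ) / n) • v, ?_, ?_⟩
    · refine hKconv haK hvK ?_ ?_ ?_
      · positivity
      · positivity
      · field_simp; ring
    · rw [smul_add, smul_smul, smul_smul, ← haz]
      have h1 : (n : ℝ) * (((n : ℝ) - 1) / n) = (n : ℝ) - 1 := by field_simp
      have h2 : (n : ℝ) * ((1 : ℝ) / n) = 1 := by field_simp
      rw [h1, h2, one_smul]
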